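/- arXiv:1002.2710 — 2 statements merged into one kernel-verified Lean document; each statement's English description precedes it below -/
import Mathlib

section
/- Let e₁, ..., e_N be an orthonormal basis of ℝ^N, and let the D-type roots be the vectors ±eᵢ ± eⱼ with i ≠ j. Suppose v is a D-type root and w₁, w₂, w₃ are three pairwise orthogonal D-type roots such that |⟨v, wₗ⟩| = 1 for each l = 1, 2, 3. Then, up to replacing some wₗ by its negative, two of the roots w₁, w₂, w₃ are of the form eⱼ + e_k and eⱼ - e_k for some indices j ≠ k. -/
/-- A D-type root in ℝ^N: a vector of the form ±eᵢ ± eⱼ with i ≠ j. -/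
def IsDRoot (N : ℕ) (v : EuclideanSpace ℝ (Fin N)) : Prop :=
  ∃ i j : Fin N, i ≠ j ∧ ∃ s t : ℝ, (s = 1 ∨ s = -1) ∧ (t = 1 ∨ t = -1) ∧
    v = s • EuclideanSpace.single i (1 : ℝ) + t • EuclideanSpace.single j (1 : ℝ)

noncomputable def droot {N : ℕ} (i j : Fin N) (s t : ℝ) : EuclideanSpace ℝ (Fin N) :=
  s • EuclideanSpace.single i (1 : ℝ) + t • EuclideanSpace.single j (1 : ℝ)

lemma inner_droot {N : ℕ} (i j a b : Fin N) (s t σ τ : ℝ) :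
    (inner ℝ (droot i j s t) (droot a b σ τ) : ℝ) =
      s*σ*(if i = a then 1 else 0) + s*τ*(if i = b then 1 else 0)
      + t*σ*(if j = a then 1 else 0) + t*τ*(if j = b then 1 else 0) := by
  simp [droot, inner_add_left, inner_add_right, real_inner_smul_left, real_inner_smul_right,
    EuclideanSpace.inner_single_left, EuclideanSpace.single_apply]
  ring_nf

lemma droot_comm {N : ℕ} (i j : Fin N) (s t : ℝ) : droot i j s t = droot j i t s := by
  simp [droot, add_comm]

lemma coincide {N : ℕ} (i j a b : Fin N) (s t σ τ : ℝ)
    (hij : i ≠ j) (hab : a ≠ b)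
    (hs : s = 1 ∨ s = -1) (ht : t = 1 ∨ t = -1)
    (hσ : σ = 1 ∨ σ = -1) (hτ : τ = 1 ∨ τ = -1)
    (h : |(inner ℝ (droot i j s t) (droot a b σ τ) : ℝ)| = 1) :
    ∃ p q : Fin N, ∃ ρ δ : ℝ, (ρ = 1 ∨ ρ = -1) ∧ (δ = 1 ∨ δ = -1) ∧
      (p = i ∨ p = j) ∧ q ≠ i ∧ q ≠ j ∧ p ≠ q ∧ droot a b σ τ = droot p q ρ δ := by
  rw [inner_droot] at h
  by_cases h1 : i = a <;> by_cases h2 : i = b <;> by_cases h3 : j = a <;> by_cases h4 : j = b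
  · exact absurd (h1.symm.trans h2) hab
  · exact absurd (h1.symm.trans h2) hab
  · exact absurd (h1.symm.trans h2) hab
  · exact absurd (h1.symm.trans h2) hab
  · exact absurd (h3.symm.trans h4) hab
  · exact absurd (h1.trans h3.symm) hij
  · rw [if_pos h1, if_neg h2, if_neg h3, if_pos h4] at h
    exfalso
    rcases hs with rfl|rfl <;> rcases ht with rfl|rfl <;>
      rcases hσ with rfl|rfl <;> rcases hτ with rfl|rfl <;> norm_num at h
  · exact ⟨a, b, σ, τ, hσ, hτ, Or.inl h1.symm, fun e => h2 e.symm, fun e => h4 e.symm, hab, rfl⟩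
  · exact absurd (h3.symm.trans h4) hab
  · rw [if_neg h1, if_pos h2, if_pos h3, if_neg h4] at h
    exfalso
    rcases hs with rfl|rfl <;> rcases ht with rfl|rfl <;>
      rcases hσ with rfl|rfl <;> rcases hτ with rfl|rfl <;> norm_num at h
  · exact absurd (h2.trans h4.symm) hij
  · exact ⟨b, a, τ, σ, hτ, hσ, Or.inl h2.symm, fun e => h1 e.symm, fun e => h3 e.symm,
      Ne.symm hab, droot_comm a b σ τ⟩
  · exact absurd (h3.symm.trans h4) hab
  · exact ⟨a, b, σ, τ, hσ, hτ, Or.inr h3.symm, fun e => h2 e.symm, fun e => h4 e.symm, hab, rfl⟩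
  · exact ⟨b, a, τ, σ, hτ, hσ, Or.inr h4.symm, fun e => h1 e.symm, fun e => h3 e.symm,
      Ne.symm hab, droot_comm a b σ τ⟩
  · rw [if_neg h1, if_neg h2, if_neg h3, if_neg h4] at h
    simp at h

lemma orth_pair {N : ℕ} (p1 q1 p2 q2 : Fin N) (ρ1 δ1 ρ2 δ2 : ℝ)
    (hρ1 : ρ1 = 1 ∨ ρ1 = -1) (hδ1 : δ1 = 1 ∨ δ1 = -1)
    (hρ2 : ρ2 = 1 ∨ ρ2 = -1) (hδ2 : δ2 = 1 ∨ δ2 = -1)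
    (hp : p1 = p2) (h1 : p1 ≠ q2) (h2 : q1 ≠ p2)
    (h : (inner ℝ (droot p1 q1 ρ1 δ1) (droot p2 q2 ρ2 δ2) : ℝ) = 0) :
    q1 = q2 ∧ ρ1 * δ1 = -(ρ2 * δ2) := by
  rw [inner_droot, if_pos hp, if_neg h1, if_neg h2] at h
  by_cases hq : q1 = q2
  · refine ⟨hq, ?_⟩
    rw [if_pos hq] at h
    rcases hρ1 with rfl|rfl <;> rcases hδ1 with rfl|rfl <;>
      rcases hρ2 with rfl|rfl <;> rcases hδ2 with rfl|rfl <;> norm_num at h <;> norm_num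
  · exfalso
    rw [if_neg hq] at h
    rcases hρ1 with rfl|rfl <;> rcases hρ2 with rfl|rfl <;> norm_num at h

lemma smul_droot_pos {N : ℕ} (p q : Fin N) (ρ δ : ℝ)
    (hρ : ρ = 1 ∨ ρ = -1) (hδ : δ = 1 ∨ δ = -1) (h : ρ * δ = 1) :
    ρ • droot p q ρ δ = EuclideanSpace.single p (1:ℝ) + EuclideanSpace.single q (1:ℝ) := by
  rcases hρ with rfl|rfl <;> rcases hδ with rfl|rfl <;> norm_num at h <;> simp only [droot] <;> module

lemma smul_droot_neg {N : ℕ} (p q : Fin N) (ρ δ : ℝ)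
    (hρ : ρ = 1 ∨ ρ = -1) (hδ : δ = 1 ∨ δ = -1) (h : ρ * δ = -1) :
    ρ • droot p q ρ δ = EuclideanSpace.single p (1:ℝ) - EuclideanSpace.single q (1:ℝ) := by
  rcases hρ with rfl|rfl <;> rcases hδ with rfl|rfl <;> norm_num at h <;> simp only [droot] <;> module

/-- If a D-type root v has inner product ±1 with three pairwise orthogonal
D-type roots w₁,w₂,w₃, then, up to sign, two of them are e_j + e_k and e_j - e_k. -/
theorem stmt9 (N : ℕ) (v : EuclideanSpace ℝ (Fin N))
    (w : Fin 3 → EuclideanSpace ℝ (Fin N))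
    (hv : IsDRoot N v) (hw : ∀ l, IsDRoot N (w l))
    (horth : ∀ l l', l ≠ l' → (inner ℝ (w l) (w l') : ℝ) = 0)
    (hin : ∀ l, |(inner ℝ (v) (w l) : ℝ)| = 1) :
    ∃ j k : Fin N, j ≠ k ∧ ∃ l₁ l₂ : Fin 3, l₁ ≠ l₂ ∧ ∃ s₁ s₂ : ℝ,
      (s₁ = 1 ∨ s₁ = -1) ∧ (s₂ = 1 ∨ s₂ = -1) ∧
      s₁ • w l₁ = EuclideanSpace.single j (1 : ℝ) + EuclideanSpace.single k (1 : ℝ) ∧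
      s₂ • w l₂ = EuclideanSpace.single j (1 : ℝ) - EuclideanSpace.single k (1 : ℝ) := by
  obtain ⟨i, j, hij, s, t, hs, ht, hveq⟩ := hv
  have hveq' : v = droot i j s t := hveq
  have key : ∀ l : Fin 3, ∃ p q : Fin N, ∃ ρ δ : ℝ, (ρ = 1 ∨ ρ = -1) ∧ (δ = 1 ∨ δ = -1) ∧
      (p = i ∨ p = j) ∧ q ≠ i ∧ q ≠ j ∧ p ≠ q ∧ w l = droot p q ρ δ := by
    intro l
    obtain ⟨a, b, hab, σ, τ, hσ, hτ, hwl⟩ := hw l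
    have hwl' : w l = droot a b σ τ := hwl
    have h1 := hin l
    rw [hveq', hwl'] at h1
    obtain ⟨p, q, ρ, δ, hρ, hδ, hpij, hqi, hqj, hpq, heq⟩ :=
      coincide i j a b s t σ τ hij hab hs ht hσ hτ h1
    exact ⟨p, q, ρ, δ, hρ, hδ, hpij, hqi, hqj, hpq, hwl'.trans heq⟩
  choose p q ρ δ hρ hδ hpij hqi hqj hpq hwe using key
  -- pigeonhole: two of p 0, p 1, p 2 agree
  obtain ⟨l₁, l₂, hne, hpp⟩ : ∃ l₁ l₂ : Fin 3, l₁ ≠ l₂ ∧ p l₁ = p l₂ := by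
    rcases hpij 0 with h0|h0 <;> rcases hpij 1 with h1|h1 <;> rcases hpij 2 with h2|h2
    · exact ⟨0, 1, by decide, h0.trans h1.symm⟩
    · exact ⟨0, 1, by decide, h0.trans h1.symm⟩
    · exact ⟨0, 2, by decide, h0.trans h2.symm⟩
    · exact ⟨1, 2, by decide, h1.trans h2.symm⟩
    · exact ⟨1, 2, by decide, h1.trans h2.symm⟩
    · exact ⟨0, 2, by decide, h0.trans h2.symm⟩
    · exact ⟨0, 1, by decide, h0.trans h1.symm⟩
    · exact ⟨0, 1, by decide, h0.trans h1.symm⟩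
  have horth' := horth l₁ l₂ hne
  rw [hwe l₁, hwe l₂] at horth'
  have hpq2 : p l₁ ≠ q l₂ := by
    rcases hpij l₁ with e|e <;> rw [e] <;> intro e' <;>
      [exact hqi l₂ e'.symm; exact hqj l₂ e'.symm]
  have hqp2 : q l₁ ≠ p l₂ := by
    rcases hpij l₂ with e|e <;> rw [e] <;> [exact hqi l₁; exact hqj l₁]
  obtain ⟨hqq, hsgn⟩ := orth_pair (p l₁) (q l₁) (p l₂) (q l₂) (ρ l₁) (δ l₁) (ρ l₂) (δ l₂)
    (hρ l₁) (hδ l₁) (hρ l₂) (hδ l₂) hpp hpq2 hqp2 horth'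
  have hcases : ρ l₁ * δ l₁ = 1 ∨ ρ l₁ * δ l₁ = -1 := by
    rcases hρ l₁ with e|e <;> rcases hδ l₁ with e'|e' <;> rw [e, e'] <;> norm_num
  rcases hcases with hc | hc
  · have hc2 : ρ l₂ * δ l₂ = -1 := by linarith [hsgn]
    refine ⟨p l₁, q l₁, hpq l₁, l₁, l₂, hne, ρ l₁, ρ l₂, hρ l₁, hρ l₂, ?_, ?_⟩
    · rw [hwe l₁]; exact smul_droot_pos _ _ _ _ (hρ l₁) (hδ l₁) hc
    · rw [hwe l₂, ← hpp, ← hqq] at *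
      exact smul_droot_neg _ _ _ _ (hρ l₂) (hδ l₂) hc2
  · have hc2 : ρ l₂ * δ l₂ = 1 := by linarith [hsgn]
    refine ⟨p l₂, q l₂, ?_, l₂, l₁, hne.symm, ρ l₂, ρ l₁, hρ l₂, hρ l₁, ?_, ?_⟩
    · exact hpq l₂
    · rw [hwe l₂]; exact smul_droot_pos _ _ _ _ (hρ l₂) (hδ l₂) hc2
    · rw [hwe l₁, hpp, hqq]
      exact smul_droot_neg _ _ _ _ (hρ l₁) (hδ l₁) hc
end

section
/- Let e₁, ..., e_N be an orthonormal basis of ℝ^N and consider the A-type roots eᵢ - eⱼ for i ≠ j. Then for any fixed A-type root v, there do not exist three pairwise orthogonal A-type roots w₁, w₂, w₃ with |⟨v, wₗ⟩| = 1 for all l = 1, 2, 3. -/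
/-- An A-type root in ℝ^N: a vector of the form eᵢ - eⱼ with i ≠ j. -/
def IsARoot (N : ℕ) (v : EuclideanSpace ℝ (Fin N)) : Prop :=
  ∃ i j : Fin N, i ≠ j ∧
    v = EuclideanSpace.single i (1 : ℝ) - EuclideanSpace.single j (1 : ℝ)

private lemma ip (N : ℕ) (a b c d : Fin N) :
    (inner ℝ (EuclideanSpace.single a (1:ℝ) - EuclideanSpace.single b 1)
      (EuclideanSpace.single c (1:ℝ) - EuclideanSpace.single d 1) : ℝ) =
    (if c = a then 1 else 0) - (if d = a then 1 else 0)
      - (if c = b then 1 else 0) + (if d = b then 1 else 0) := by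
  simp [inner_sub_left, inner_sub_right, EuclideanSpace.inner_single_left,
    EuclideanSpace.single_apply]
  simp only [eq_comm (a := a), eq_comm (a := b)]
  ring

private lemma one_common {N : ℕ} {a b c d : Fin N} (hab : a ≠ b) (hcd : c ≠ d)
    (h : |((if c = a then (1:ℝ) else 0) - (if d = a then 1 else 0)
      - (if c = b then 1 else 0) + (if d = b then 1 else 0))| = 1) :
    ((c = a ∨ d = a) ∧ ¬(c = b ∨ d = b)) ∨ (¬(c = a ∨ d = a) ∧ (c = b ∨ d = b)) := by
  split_ifs at h <;> simp_all <;> norm_num at h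

private lemma common_not_orth {N : ℕ} {a b c d : Fin N} (hab : a ≠ b) (hcd : c ≠ d)
    (hsh : c = a ∨ d = a ∨ c = b ∨ d = b) :
    ((if c = a then (1:ℝ) else 0) - (if d = a then 1 else 0)
      - (if c = b then 1 else 0) + (if d = b then 1 else 0)) ≠ 0 := by
  split_ifs <;> simp_all <;> norm_num

/-- No A-type root has inner product ±1 with three pairwise orthogonal A-type roots. -/
theorem stmt12 (N : ℕ) (v : EuclideanSpace ℝ (Fin N)) (hv : IsARoot N v) :
    ¬ ∃ w : Fin 3 → EuclideanSpace ℝ (Fin N),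
      (∀ l, IsARoot N (w l)) ∧ (∀ l l', l ≠ l' → (inner ℝ (w l) (w l') : ℝ) = 0) ∧
      (∀ l, |(inner ℝ (v) (w l) : ℝ)| = 1) := by
  rintro ⟨w, hroot, horth, hnorm⟩
  obtain ⟨i, j, hij, rfl⟩ := hv
  choose c d hcd hw using hroot
  have key : ∀ l, ((c l = i ∨ d l = i) ∧ ¬(c l = j ∨ d l = j)) ∨
      (¬(c l = i ∨ d l = i) ∧ (c l = j ∨ d l = j)) := by
    intro l
    have h := hnorm l
    rw [hw l, ip] at h
    exact one_common hij (hcd l) h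
  have contra : ∀ (a : Fin N) (l l' : Fin 3), l ≠ l' →
      (c l' = c l ∨ d l' = c l ∨ c l' = d l ∨ d l' = d l) → False := by
    intro a l l' hne hsh
    have h0 := horth l l' hne
    rw [hw l, hw l', ip] at h0
    exact common_not_orth (hcd l) (hcd l') hsh h0
  have contra2 : ∀ (a : Fin N) (l l' : Fin 3), l ≠ l' →
      (c l = a ∨ d l = a) → (c l' = a ∨ d l' = a) → False := by
    intro a l l' hne hp hp'
    refine contra a l l' hne ?_
    rcases hp with rfl | rfl <;> tauto
  rcases key 0 with ⟨h0, _⟩ | ⟨_, h0⟩ <;> rcases key 1 with ⟨h1, _⟩ | ⟨_, h1⟩ <;>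
    rcases key 2 with ⟨h2, _⟩ | ⟨_, h2⟩
  · exact contra2 i 0 1 (by decide) h0 h1
  · exact contra2 i 0 1 (by decide) h0 h1
  · exact contra2 i 0 2 (by decide) h0 h2
  · exact contra2 j 1 2 (by decide) h1 h2
  · exact contra2 i 1 2 (by decide) h1 h2
  · exact contra2 j 0 2 (by decide) h0 h2
  · exact contra2 j 0 1 (by decide) h0 h1
  · exact contra2 j 0 1 (by decide) h0 h1
end
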